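/- Let X be a locally compact Hausdorff topological space, let a₁,…,a_N : X → ℝ be continuous functions such that (i) they separate points of X, and (ii) the map x ↦ Σ_j |a_j(x)| tends to infinity at infinity (i.e. {x : Σ|a_j(x)| ≤ R} is compact for every R). Then for every continuous compactly supported function f : X → ℝ there exists a continuous compactly supported function g : ℝ^N → ℝ such that f(x) = g(a₁(x),…,a_N(x)) for all x ∈ X. -/

import Mathlib

/-- Topological lemma: if finitely many continuous functions separate points and tend to
infinity at infinity, every continuous compactly supported function on `X` factors through
them via a continuous compactly supported function on `ℝ^N`. -/
theorem factor_through_separating_system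
    (X : Type*) [TopologicalSpace X] [T2Space X] [LocallyCompactSpace X]
    (N : ℕ) (a : Fin N → X → ℝ) (ha : ∀ j, Continuous (a j))
    (hsep : ∀ x x' : X, x ≠ x' → ∃ j, a j x ≠ a j x')
    (hinf : ∀ R : ℝ, IsCompact {x : X | ∑ j, |a j x| ≤ R}) :
    ∀ f : X → ℝ, Continuous f → HasCompactSupport f →
      ∃ g : (Fin N → ℝ) → ℝ, Continuous g ∧ HasCompactSupport g ∧
        ∀ x : X, f x = g (fun j => a j x) := by
  set A : X → (Fin N → ℝ) := fun x j => a j x with hAdef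
  have hA : Continuous A := continuous_pi ha
  have hinj : Function.Injective A := by
    intro x x' h
    by_contra hne
    obtain ⟨j, hj⟩ := hsep x x' hne
    exact hj (congrFun h j)
  -- A is proper
  have hprop : IsProperMap A := by
    rw [isProperMap_iff_isCompact_preimage]
    refine ⟨hA, fun K hK => ?_⟩
    obtain ⟨r, hr⟩ := hK.isBounded.subset_closedBall 0
    refine (hinf ((N : ℝ) * r)).of_isClosed_subset
      (hK.isClosed.preimage hA) ?_
    intro x hx
    have hxK : A x ∈ Metric.closedBall 0 r := hr hx
    rw [Metric.mem_closedBall, dist_zero_right] at hxK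
    have hsum : ∑ j, |a j x| ≤ ∑ _j : Fin N, r := by
      refine Finset.sum_le_sum fun j _ => ?_
      calc |a j x| = ‖(A x) j‖ := rfl
        _ ≤ ‖A x‖ := norm_le_pi_norm _ j
        _ ≤ r := hxK
    simpa using hsum.trans_eq (by simp [mul_comm])
  have he : Topology.IsClosedEmbedding A :=
    .of_continuous_injective_isClosedMap hA hinj hprop.isClosedMap
  intro f hf hfc
  -- Tietze extension
  obtain ⟨G, hG⟩ := ContinuousMap.exists_extension' (e := A) he ⟨f, hf⟩
  -- cutoff function
  set K' : Set (Fin N → ℝ) := A '' tsupport f with hK'def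
  have hK'c : IsCompact K' := hfc.image hA
  have hsopen : IsOpen (Metric.thickening 1 K') := Metric.isOpen_thickening
  have hsclos : IsCompact (closure (Metric.thickening 1 K')) := by
    refine (hK'c.cthickening (r := 1)).of_isClosed_subset isClosed_closure ?_
    exact closure_minimal (Metric.thickening_subset_cthickening 1 K')
      Metric.isClosed_cthickening
  obtain ⟨φ, hφsupp, hφone, hφmem⟩ :=
    exists_tsupport_one_of_isOpen_isClosed hsopen hsclos hK'c.isClosed
      (Metric.self_subset_thickening one_pos K')
  have hφc : HasCompactSupport φ :=
    hsclos.of_isClosed_subset (isClosed_tsupport _)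
      (hφsupp.trans subset_closure)
  refine ⟨fun y => φ y * G y, (map_continuous φ).mul (map_continuous G),
    hφc.mul_right, fun x => ?_⟩
  have hGx : G (A x) = f x := congrFun hG x
  by_cases hx : x ∈ tsupport f
  · have : φ (A x) = 1 := hφone ⟨x, hx, rfl⟩
    change f x = φ (A x) * G (A x)
    simp [this, hGx]
  · have : f x = 0 := image_eq_zero_of_notMem_tsupport hx
    change f x = φ (A x) * G (A x)
    simp [this, hGx]
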